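/- If G has a Hamiltonian path visiting vertices in order v_{i_1},...,v_{i_n}, then the path in G' consisting of arcs (s,v_{i_1}^1), (v_{i_1}^1,v_{i_1}^2), (v_{i_1}^2,v_{i_2}^3), (v_{i_2}^3,v_{i_2}^4), ..., (v_{i_n}^{2n},t) is a well-defined s-t path in G' that intersects every vertical path P_1,...,P_n in exactly one vertical arc. -/

import Mathlib

abbrev Vtx (n : ℕ) := Sum Unit (Sum (Fin n × Fin (2 * n)) Unit)

def src (n : ℕ) : Vtx n := Sum.inl ()
def snk (n : ℕ) : Vtx n := Sum.inr (Sum.inr ())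
def mid {n : ℕ} (i : Fin n) (j : Fin (2 * n)) : Vtx n := Sum.inr (Sum.inl (i, j))

/-- Arcs of `G'` built from a digraph `G` on `n` vertices: vertical arcs
`s → v_i^1`, `v_i^j → v_i^{j+1}`, `v_i^{2n} → t` (layers are 0-indexed here),
and diagonal arcs `v_i^{2j} → v_k^{2j+1}` (0-indexed: from an odd layer index to
its successor) whenever `(v_i, v_k)` is an arc of `G`. -/
def Arc {n : ℕ} (G : Fin n → Fin n → Prop) : Vtx n → Vtx n → Prop
  | Sum.inl _, Sum.inr (Sum.inl (_, j)) => j.val = 0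
  | Sum.inr (Sum.inl (i, j)), Sum.inr (Sum.inl (k, j')) =>
      (i = k ∧ j'.val = j.val + 1) ∨ (G i k ∧ j.val % 2 = 1 ∧ j'.val = j.val + 1)
  | Sum.inr (Sum.inl (_, j)), Sum.inr (Sum.inr _) => j.val = 2 * n - 1
  | _, _ => False

def IsPath {α : Type*} (A : α → α → Prop) (s t : α) (p : List α) : Prop :=
  p.Chain' A ∧ p.head? = some s ∧ p.getLast? = some t

/-- A pair of endpoints forms a vertical arc `v_i^j → v_i^{j+1}` of the vertical
path `P_i`. -/
def isVertInner {n : ℕ} (i : Fin n) : Vtx n × Vtx n → Bool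
  | (Sum.inr (Sum.inl (k, _)), Sum.inr (Sum.inl (k', _))) => decide (k = i ∧ k' = i)
  | _ => false

/-- The explicit list of vertices
`s, v_{i_1}^1, v_{i_1}^2, v_{i_2}^3, v_{i_2}^4, …, v_{i_n}^{2n-1}, v_{i_n}^{2n}, t`
determined by the visiting order `σ` (so `i_{j+1} = σ j`). -/
def hamToPath (n : ℕ) (σ : Fin n → Fin n) : List (Vtx n) :=
  src n ::
    (((List.finRange n).flatMap fun j =>
      [mid (σ j) ⟨2 * j.val, by have := j.isLt; omega⟩,
       mid (σ j) ⟨2 * j.val + 1, by have := j.isLt; omega⟩]) ++ [snk n])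

/-- Auxiliary: the vertex at position `k` of the path, as a total function. -/
def pathFun (n : ℕ) (σ : Fin n → Fin n) (k : ℕ) : Vtx n :=
  if hk : 1 ≤ k ∧ k ≤ 2 * n then
    mid (σ ⟨(k - 1) / 2, by omega⟩) ⟨k - 1, by omega⟩
  else if k = 0 then src n else snk n

lemma pathFun_zero (n : ℕ) (σ : Fin n → Fin n) : pathFun n σ 0 = src n := by
  simp [pathFun]

lemma pathFun_last (n : ℕ) (σ : Fin n → Fin n) : pathFun n σ (2 * n + 1) = snk n := by
  simp [pathFun]

lemma pathFun_mid (n : ℕ) (σ : Fin n → Fin n) (k : ℕ) (h1 : 1 ≤ k) (h2 : k ≤ 2 * n) :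
    pathFun n σ k = mid (σ ⟨(k - 1) / 2, by omega⟩) ⟨k - 1, by omega⟩ := by
  rw [pathFun, dif_pos ⟨h1, h2⟩]

lemma flatMap_range_pair {α : Type*} (g : ℕ → α) :
    ∀ n, (List.range n).flatMap (fun j => [g (2 * j), g (2 * j + 1)]) =
      (List.range (2 * n)).map g := by
  intro n
  induction n with
  | zero => simp
  | succ m ih =>
      rw [List.range_succ, List.flatMap_append, ih,
        show 2 * (m + 1) = (2 * m + 1) + 1 by ring, List.range_succ, List.range_succ]
      simp

lemma hamToPath_eq (n : ℕ) (σ : Fin n → Fin n) :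
    hamToPath n σ = (List.range (2 * n + 2)).map (pathFun n σ) := by
  have hfun : (fun j : Fin n =>
      [mid (σ j) (⟨2 * j.val, by have := j.isLt; omega⟩ : Fin (2 * n)),
       mid (σ j) (⟨2 * j.val + 1, by have := j.isLt; omega⟩ : Fin (2 * n))]) =
      (fun j : Fin n => [pathFun n σ (2 * j.val + 1), pathFun n σ (2 * j.val + 2)]) := by
    funext j
    have hj := j.isLt
    rw [pathFun_mid n σ (2 * j.val + 1) (by omega) (by omega),
      pathFun_mid n σ (2 * j.val + 2) (by omega) (by omega)]
    refine congrArg₂ (fun a b => [a, b]) ?_ ?_ <;>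
      exact congrArg₂ mid (congrArg σ (Fin.ext (by simp only [Fin.val_mk]; omega))) (Fin.ext (by simp only [Fin.val_mk]; omega))
  have hflat : (List.finRange n).flatMap
        (fun j : Fin n => [pathFun n σ (2 * j.val + 1), pathFun n σ (2 * j.val + 2)]) =
      (List.range (2 * n)).map (fun k => pathFun n σ (k + 1)) := by
    rw [← flatMap_range_pair (fun k => pathFun n σ (k + 1)) n, ← (show (List.finRange n).map (fun i : Fin n => (i : ℕ)) = List.range n from
        List.ext_getElem (by simp) (by simp)),
      List.flatMap_map]
  rw [hamToPath, hfun, hflat]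
  rw [show 2 * n + 2 = (2 * n + 1) + 1 by ring, List.range_succ_eq_map, List.map_cons,
    List.map_map, List.range_succ, List.map_append]
  simp [pathFun_zero, pathFun_last, Function.comp, Nat.succ_eq_add_one]


/-- If `G` has a Hamiltonian path visiting its vertices in the order
`σ 0, σ 1, …, σ (n-1)`, then the path
`(s,v_{i_1}^1), (v_{i_1}^1,v_{i_1}^2), (v_{i_1}^2,v_{i_2}^3), …, (v_{i_n}^{2n},t)`
is a well-defined `s`-`t` path in `G'` that intersects every vertical path
`P_1, …, P_n` in exactly one vertical arc. -/
theorem hamPath_gives_path_meeting_all_verticals_once (n : ℕ) (hn : 0 < n)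
    (G : Fin n → Fin n → Prop) (σ : Fin n → Fin n)
    (hbij : Function.Bijective σ)
    (hchain : ∀ j : ℕ, (h : j + 1 < n) → G (σ ⟨j, by omega⟩) (σ ⟨j + 1, h⟩)) :
    IsPath (Arc G) (src n) (snk n) (hamToPath n σ) ∧
      ∀ i : Fin n,
        ((hamToPath n σ).zip (hamToPath n σ).tail).countP (isVertInner i) = 1 := by
  rw [hamToPath_eq n σ]
  constructor
  · refine ⟨?_, ?_, ?_⟩
    · -- Chain'
      rw [show 2 * n + 2 = (2 * n + 1) + 1 from rfl, List.Chain', List.isChain_map,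
        List.isChain_range_succ]
      intro m hm
      simp only [Nat.succ_eq_add_one]
      rcases Nat.eq_or_lt_of_le (Nat.zero_le m) with h0 | hpos
      · -- m = 0
        rw [← h0, pathFun_zero, pathFun_mid n σ 1 (by omega) (by omega)]
        show (1 - 1 : ℕ) = 0
        omega
      · rcases Nat.lt_or_ge m (2 * n) with hlt | hge
        · -- middle arcs: 1 ≤ m, m + 1 ≤ 2n
          rw [pathFun_mid n σ m (by omega) (by omega),
            pathFun_mid n σ (m + 1) (by omega) (by omega)]
          show (σ ⟨(m - 1) / 2, _⟩ = σ ⟨(m + 1 - 1) / 2, _⟩ ∧ m + 1 - 1 = m - 1 + 1) ∨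
            (G (σ ⟨(m - 1) / 2, _⟩) (σ ⟨(m + 1 - 1) / 2, _⟩) ∧ (m - 1) % 2 = 1 ∧
              m + 1 - 1 = m - 1 + 1)
          rcases Nat.even_or_odd m with he | ho
          · -- m even, m ≥ 2: diagonal arc
            obtain ⟨j, hj⟩ := he
            refine Or.inr ⟨?_, by omega, by omega⟩
            have hjn : (m - 1) / 2 + 1 < n := by omega
            have := hchain ((m - 1) / 2) hjn
            have e : (⟨(m + 1 - 1) / 2, by omega⟩ : Fin n) = ⟨(m - 1) / 2 + 1, hjn⟩ :=
              Fin.ext (by simp only [Fin.val_mk]; omega)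
            rw [e]
            exact this
          · -- m odd: vertical arc
            obtain ⟨j, hj⟩ := ho
            exact Or.inl ⟨congrArg σ (Fin.ext (by simp only [Fin.val_mk]; omega)), by omega⟩
        · -- m = 2n : last arc to sink
          have hm2 : m = 2 * n := by omega
          rw [hm2, pathFun_mid n σ (2 * n) (by omega) (by omega),
            show 2 * n + 1 = 2 * n + 1 from rfl, pathFun_last]
          show (2 * n - 1 : ℕ) = 2 * n - 1
          rfl
    · -- head
      rw [show 2 * n + 2 = (2 * n + 1) + 1 from rfl, List.range_succ_eq_map]
      simp [pathFun_zero]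
    · -- last
      rw [show 2 * n + 2 = (2 * n + 1) + 1 from rfl, List.range_succ, List.map_append]
      simp [pathFun_last]
  · -- counting
    intro i
    obtain ⟨j₀, hj₀⟩ := hbij.surjective i
    have hzip : ((List.range (2 * n + 2)).map (pathFun n σ)).zip
        (((List.range (2 * n + 2)).map (pathFun n σ)).tail) =
        (List.range (2 * n + 1)).map (fun k => (pathFun n σ k, pathFun n σ (k + 1))) := by
      have t : ((List.range (2 * n + 2)).map (pathFun n σ)).tail =
          (List.range (2 * n + 1)).map (fun k => pathFun n σ (k + 1)) := by
        rw [show 2 * n + 2 = (2 * n + 1) + 1 from rfl, List.range_succ_eq_map,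
          List.map_cons, List.tail_cons, List.map_map]
        rfl
      rw [t, show 2 * n + 2 = (2 * n + 1) + 1 from rfl, List.range_succ, List.map_append,
        ← List.append_nil ((List.range (2 * n + 1)).map fun k => pathFun n σ (k + 1)),
        List.zip_append (by simp), List.zip_map']
      simp
    rw [hzip, List.countP_map]
    have hcongr : ∀ k ∈ List.range (2 * n + 1),
        ((isVertInner i ∘ fun k => (pathFun n σ k, pathFun n σ (k + 1))) k = true) ↔
          ((k == 2 * j₀.val + 1) = true) := by
      intro k hk
      rw [List.mem_range] at hk
      simp only [Function.comp_apply, beq_iff_eq]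
      rcases Nat.even_or_odd k with he | ho
      · -- even k: count is false
        obtain ⟨j, hj⟩ := he
        have hodd : k ≠ 2 * j₀.val + 1 := by omega
        simp only [hodd, iff_false]
        rcases Nat.eq_or_lt_of_le (Nat.zero_le k) with h0 | hpos
        · -- k = 0
          rw [← h0, pathFun_zero, pathFun_mid n σ 1 (by omega) (by omega)]
          simp [isVertInner, src, mid]
        · rcases Nat.lt_or_ge k (2 * n) with hlt | hge
          · rw [pathFun_mid n σ k (by omega) (by omega),
              pathFun_mid n σ (k + 1) (by omega) (by omega)]
            show decide (σ ⟨(k - 1) / 2, _⟩ = i ∧ σ ⟨(k + 1 - 1) / 2, _⟩ = i) = true → False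
            intro hd
            rw [decide_eq_true_iff] at hd
            have : σ ⟨(k - 1) / 2, by omega⟩ = σ ⟨(k + 1 - 1) / 2, by omega⟩ :=
              hd.1.trans hd.2.symm
            have := hbij.injective this
            have := congrArg Fin.val this
            simp only [Fin.val_mk] at this
            omega
          · have hk2 : k = 2 * n := by omega
            rw [hk2, pathFun_mid n σ (2 * n) (by omega) (by omega), pathFun_last]
            simp [isVertInner, snk, mid]
      · -- odd k
        obtain ⟨j, hj⟩ := ho
        rw [pathFun_mid n σ k (by omega) (by omega),
          pathFun_mid n σ (k + 1) (by omega) (by omega)]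
        show decide (σ ⟨(k - 1) / 2, _⟩ = i ∧ σ ⟨(k + 1 - 1) / 2, _⟩ = i) = true ↔
          k = 2 * j₀.val + 1
        rw [decide_eq_true_iff]
        constructor
        · rintro ⟨h1, -⟩
          rw [← hj₀] at h1
          have := congrArg Fin.val (hbij.injective h1)
          simp only [Fin.val_mk] at this
          omega
        · intro hk'
          have e1 : (⟨(k - 1) / 2, by omega⟩ : Fin n) = j₀ :=
            Fin.ext (by simp only [Fin.val_mk]; omega)
          have e2 : (⟨(k + 1 - 1) / 2, by omega⟩ : Fin n) = j₀ :=
            Fin.ext (by simp only [Fin.val_mk]; omega)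
          rw [e1, e2, hj₀]
          exact ⟨rfl, rfl⟩
    rw [List.countP_congr hcongr]
    have : List.countP (fun k => k == 2 * j₀.val + 1) (List.range (2 * n + 1)) =
        List.count (2 * j₀.val + 1) (List.range (2 * n + 1)) := rfl
    rw [this]
    exact List.count_eq_one_of_mem List.nodup_range
      (List.mem_range.mpr (by have := j₀.isLt; omega))
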